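/- Evaluated at the critical point P_{ijl}(t) = (x_{ij}(y_{ijl}(t),t), y_{ijl}(t)), the phase difference θ_i - θ_k equals (p_k - p_i)(p_k - p_j)(p_l - p_k)(t - t_{ijkl}); in particular, if p_i < p_j < p_k < p_l and t < t_{ijkl}, then θ_k > θ_i at P_{ijl}(t). -/
import Mathlib


noncomputable def phase (pm cm x y t : ℝ) : ℝ := pm * x + pm ^ 2 * y + pm ^ 3 * t + cm

noncomputable def xline (pa pb ca cb y t : ℝ) : ℝ :=
  -(pa + pb) * y - (pa ^ 2 + pa * pb + pb ^ 2) * t - (ca - cb) / (pa - pb)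

noncomputable def c3s (pi pj pk ci cj ck : ℝ) : ℝ :=
  ci / ((pi - pj) * (pi - pk)) + cj / ((pj - pi) * (pj - pk)) + ck / ((pk - pi) * (pk - pj))

noncomputable def yfun (pi pj pk ci cj ck t : ℝ) : ℝ :=
  -(pi + pj + pk) * t - c3s pi pj pk ci cj ck

noncomputable def c4s (pi pj pk pl ci cj ck cl : ℝ) : ℝ :=
  ci / ((pi - pj) * (pi - pk) * (pi - pl)) + cj / ((pj - pi) * (pj - pk) * (pj - pl)) +
    ck / ((pk - pi) * (pk - pj) * (pk - pl)) + cl / ((pl - pi) * (pl - pj) * (pl - pk))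

noncomputable def tcrit4 (pi pj pk pl ci cj ck cl : ℝ) : ℝ :=
  -c4s pi pj pk pl ci cj ck cl


lemma coeff_i (pi pj pk pl : ℝ) (h1 : pi - pj ≠ 0) (h3 : pi - pl ≠ 0) (h2 : pi - pk ≠ 0) :
    -((pi - pk) * (pk - pj) * (1 / ((pi - pj) * (pi - pl)))) - (pi - pk) * (1 / (pi - pj)) + 1
      = (pk - pi) * (pk - pj) * (pl - pk) * (1 / ((pi - pj) * (pi - pk) * (pi - pl))) := by
  field_simp
  ring

lemma coeff_j (pi pj pk pl : ℝ) (h1 : pj - pi ≠ 0) (h3 : pj - pl ≠ 0) (h2 : pj - pk ≠ 0) :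
    -((pi - pk) * (pk - pj) * (1 / ((pj - pi) * (pj - pl)))) - (pi - pk) * (-(1 / (pi - pj)))
      = (pk - pi) * (pk - pj) * (pl - pk) * (1 / ((pj - pi) * (pj - pk) * (pj - pl))) := by
  have h1' : pi - pj ≠ 0 := fun h => h1 (by linarith [sub_eq_zero.mp h])
  field_simp
  ring

lemma coeff_k (pi pj pk pl : ℝ) (h1 : pk - pi ≠ 0) (h2 : pk - pj ≠ 0) (h3 : pk - pl ≠ 0) :
    (-1 : ℝ) = (pk - pi) * (pk - pj) * (pl - pk) * (1 / ((pk - pi) * (pk - pj) * (pk - pl))) := by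
  field_simp
  ring

lemma coeff_l (pi pj pk pl : ℝ) (h1 : pl - pi ≠ 0) (h2 : pl - pj ≠ 0) (h3 : pl - pk ≠ 0) :
    -((pi - pk) * (pk - pj) * (1 / ((pl - pi) * (pl - pj))))
      = (pk - pi) * (pk - pj) * (pl - pk) * (1 / ((pl - pi) * (pl - pj) * (pl - pk))) := by
  field_simp
  ring

/-- At the critical point P_{ijl}(t), θ_i - θ_k = (p_k-p_i)(p_k-p_j)(p_l-p_k)(t - t_{ijkl});
in particular for p_i < p_j < p_k < p_l and t < t_{ijkl}, θ_k dominates θ_i there. -/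
theorem phase_diff_at_Pijl (pi pj pk pl ci cj ck cl : ℝ)
    (hij : pi ≠ pj) (hik : pi ≠ pk) (hil : pi ≠ pl)
    (hjk : pj ≠ pk) (hjl : pj ≠ pl) (hkl : pk ≠ pl) :
    (∀ t, phase pi ci (xline pi pj ci cj (yfun pi pj pl ci cj cl t) t)
            (yfun pi pj pl ci cj cl t) t -
          phase pk ck (xline pi pj ci cj (yfun pi pj pl ci cj cl t) t)
            (yfun pi pj pl ci cj cl t) t
        = (pk - pi) * (pk - pj) * (pl - pk) * (t - tcrit4 pi pj pk pl ci cj ck cl)) ∧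
    (pi < pj → pj < pk → pk < pl →
      ∀ t, t < tcrit4 pi pj pk pl ci cj ck cl →
        phase pk ck (xline pi pj ci cj (yfun pi pj pl ci cj cl t) t)
            (yfun pi pj pl ci cj cl t) t >
          phase pi ci (xline pi pj ci cj (yfun pi pj pl ci cj cl t) t)
            (yfun pi pj pl ci cj cl t) t) := by
  have h1 : pi - pj ≠ 0 := sub_ne_zero.2 hij
  have h2 : pi - pk ≠ 0 := sub_ne_zero.2 hik
  have h3 : pi - pl ≠ 0 := sub_ne_zero.2 hil
  have h4 : pj - pi ≠ 0 := sub_ne_zero.2 hij.symm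
  have h5 : pj - pk ≠ 0 := sub_ne_zero.2 hjk
  have h6 : pj - pl ≠ 0 := sub_ne_zero.2 hjl
  have h7 : pk - pi ≠ 0 := sub_ne_zero.2 hik.symm
  have h8 : pk - pj ≠ 0 := sub_ne_zero.2 hjk.symm
  have h9 : pk - pl ≠ 0 := sub_ne_zero.2 hkl
  have h10 : pl - pi ≠ 0 := sub_ne_zero.2 hil.symm
  have h11 : pl - pj ≠ 0 := sub_ne_zero.2 hjl.symm
  have h12 : pl - pk ≠ 0 := sub_ne_zero.2 hkl.symm
  have key : -((pi - pk) * (pk - pj) * c3s pi pj pl ci cj cl)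
        - (pi - pk) * ((ci - cj) / (pi - pj)) + ci - ck
      = (pk - pi) * (pk - pj) * (pl - pk) * c4s pi pj pk pl ci cj ck cl := by
    have Ai := coeff_i pi pj pk pl h1 h3 h2
    have Aj := coeff_j pi pj pk pl h4 h6 h5
    have Ak := coeff_k pi pj pk pl h7 h8 h9
    have Al := coeff_l pi pj pk pl h10 h11 h12
    simp only [c3s, c4s]
    linear_combination ci * Ai + cj * Aj + ck * Ak + cl * Al
  have main : ∀ t, phase pi ci (xline pi pj ci cj (yfun pi pj pl ci cj cl t) t)
            (yfun pi pj pl ci cj cl t) t -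
          phase pk ck (xline pi pj ci cj (yfun pi pj pl ci cj cl t) t)
            (yfun pi pj pl ci cj cl t) t
        = (pk - pi) * (pk - pj) * (pl - pk) * (t - tcrit4 pi pj pk pl ci cj ck cl) := by
    intro t
    simp only [phase, xline, yfun, tcrit4]
    linear_combination key
  refine ⟨main, fun hij' hjk' hkl' t ht => ?_⟩
  have h := main t
  have hpos : (pk - pi) * (pk - pj) * (pl - pk) * (t - tcrit4 pi pj pk pl ci cj ck cl) < 0 := by
    apply mul_neg_of_pos_of_neg
    · have : pk - pi > 0 := by linarith
      have : pk - pj > 0 := by linarith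
      have : pl - pk > 0 := by linarith
      positivity
    · linarith
  linarith
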